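/- Let n ≥ 3. Since A_n is characteristic in G_n, every automorphism of G_n induces an automorphism of W_n = G_n/A_n, giving a homomorphism π : Aut(G_n) → Aut(W_n). Then π is surjective and its kernel equals t(M*), the group of translation automorphisms of G_n; that is, there is a short exact sequence 1 → M* → Aut(G_n) → Aut(W_n) → 1 with the first map given by t. -/

import Mathlib

def HWrels (n : ℕ) : Set (FreeGroup (Fin n)) :=
  {r | ∃ i j : Fin n, i ≠ j ∧
    r = (FreeGroup.of i)⁻¹ * FreeGroup.of j ^ 2 * FreeGroup.of i * FreeGroup.of j ^ 2}

abbrev HW (n : ℕ) : Type := PresentedGroup (HWrels n)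

def x (n : ℕ) (i : Fin n) : HW n := PresentedGroup.of i

def A (n : ℕ) : Subgroup (HW n) := Subgroup.closure (Set.range fun i => x n i ^ 2)

theorem HW.relation (n : ℕ) {i j : Fin n} (h : i ≠ j) :
    (x n i)⁻¹ * x n j ^ 2 * x n i * x n j ^ 2 = 1 := by
  have hr : ((FreeGroup.of i)⁻¹ * FreeGroup.of j ^ 2 * FreeGroup.of i * FreeGroup.of j ^ 2)
      ∈ HWrels n := ⟨i, j, h, rfl⟩
  have h2 : PresentedGroup.mk (HWrels n)
      ((FreeGroup.of i)⁻¹ * FreeGroup.of j ^ 2 * FreeGroup.of i * FreeGroup.of j ^ 2) = 1 :=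
    (QuotientGroup.eq_one_iff _).mpr (Subgroup.subset_normalClosure hr)
  rw [map_mul, map_mul, map_mul, map_inv, map_pow] at h2
  exact h2

theorem HW.conj_sq_mem (n : ℕ) (k j : Fin n) :
    x n k * x n j ^ 2 * (x n k)⁻¹ ∈ A n ∧ (x n k)⁻¹ * x n j ^ 2 * x n k ∈ A n := by
  have hj : x n j ^ 2 ∈ A n := Subgroup.subset_closure ⟨j, rfl⟩
  by_cases h : k = j
  · subst h
    have e1 : x n k * x n k ^ 2 * (x n k)⁻¹ = x n k ^ 2 := by group
    have e2 : (x n k)⁻¹ * x n k ^ 2 * x n k = x n k ^ 2 := by group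
    rw [e1, e2]; exact ⟨hj, hj⟩
  · have hrel := HW.relation n h
    have e2 : (x n k)⁻¹ * x n j ^ 2 * x n k = (x n j ^ 2)⁻¹ :=
      mul_eq_one_iff_eq_inv.mp hrel
    have h3 : x n j ^ 2 = x n k * (x n j ^ 2)⁻¹ * (x n k)⁻¹ := by
      rw [← e2]; group
    have e1 : x n k * x n j ^ 2 * (x n k)⁻¹ = (x n j ^ 2)⁻¹ := by
      calc x n k * x n j ^ 2 * (x n k)⁻¹
          = (x n k * (x n j ^ 2)⁻¹ * (x n k)⁻¹)⁻¹ := by group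
        _ = (x n j ^ 2)⁻¹ := by rw [← h3]
    rw [e1, e2]
    exact ⟨Subgroup.inv_mem _ hj, Subgroup.inv_mem _ hj⟩

instance A_normal (n : ℕ) : (A n).Normal := by
  let K : Subgroup (HW n) :=
    { carrier := {g | (∀ a ∈ A n, g * a * g⁻¹ ∈ A n) ∧ (∀ a ∈ A n, g⁻¹ * a * g ∈ A n)}
      one_mem' := by simp
      mul_mem' := by
        rintro g h ⟨hg1, hg2⟩ ⟨hh1, hh2⟩
        constructor
        · intro a ha
          have := hg1 _ (hh1 a ha)
          have e : g * (h * a * h⁻¹) * g⁻¹ = g * h * a * (g * h)⁻¹ := by group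
          rwa [e] at this
        · intro a ha
          have := hh2 _ (hg2 a ha)
          have e : h⁻¹ * (g⁻¹ * a * g) * h = (g * h)⁻¹ * a * (g * h) := by group
          rwa [e] at this
      inv_mem' := by
        rintro g ⟨hg1, hg2⟩
        constructor
        · intro a ha
          have := hg2 a ha
          have e : g⁻¹ * a * g = g⁻¹ * a * g⁻¹⁻¹ := by group
          rwa [e] at this
        · intro a ha
          have := hg1 a ha
          have e : g * a * g⁻¹ = g⁻¹⁻¹ * a * g⁻¹ := by group
          rwa [e] at this }
  have hgen : ∀ j : Fin n, PresentedGroup.of (rels := HWrels n) j ∈ K := by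
    intro j
    show (∀ a ∈ A n, x n j * a * (x n j)⁻¹ ∈ A n) ∧ (∀ a ∈ A n, (x n j)⁻¹ * a * x n j ∈ A n)
    constructor
    · intro a ha
      refine Subgroup.closure_induction ?_ ?_ ?_ ?_ ha
      · rintro b ⟨i, rfl⟩
        exact (HW.conj_sq_mem n j i).1
      · simpa using Subgroup.one_mem (A n)
      · intro b c _ _ hb hc
        have e : x n j * (b * c) * (x n j)⁻¹
            = (x n j * b * (x n j)⁻¹) * (x n j * c * (x n j)⁻¹) := by group
        rw [e]; exact Subgroup.mul_mem _ hb hc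
      · intro b _ hb
        have e : x n j * b⁻¹ * (x n j)⁻¹ = (x n j * b * (x n j)⁻¹)⁻¹ := by group
        rw [e]; exact Subgroup.inv_mem _ hb
    · intro a ha
      refine Subgroup.closure_induction ?_ ?_ ?_ ?_ ha
      · rintro b ⟨i, rfl⟩
        exact (HW.conj_sq_mem n j i).2
      · simpa using Subgroup.one_mem (A n)
      · intro b c _ _ hb hc
        have e : (x n j)⁻¹ * (b * c) * x n j
            = ((x n j)⁻¹ * b * x n j) * ((x n j)⁻¹ * c * x n j) := by group
        rw [e]; exact Subgroup.mul_mem _ hb hc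
      · intro b _ hb
        have e : (x n j)⁻¹ * b⁻¹ * x n j = ((x n j)⁻¹ * b * x n j)⁻¹ := by group
        rw [e]; exact Subgroup.inv_mem _ hb
  constructor
  intro a ha g
  exact ((PresentedGroup.generated_by (HWrels n) K hgen g).1) a ha

/-- A type synonym for `M = M_n(ℤ)`, carrying the monoid structure given by
`𝔞 * 𝔟 = [c_ij]` with `c_ij = a_ij + (1 + 2 a_jj) b_ij`. -/
def MM (n : ℕ) : Type := Matrix (Fin n) (Fin n) ℤ

instance (n : ℕ) : Mul (MM n) :=
  ⟨fun 𝔞 𝔟 i j => 𝔞 i j + (1 + 2 * 𝔞 j j) * 𝔟 i j⟩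

instance (n : ℕ) : One (MM n) := ⟨fun _ _ => (0 : ℤ)⟩

theorem MM.mul_apply {n : ℕ} (𝔞 𝔟 : MM n) (i j : Fin n) :
    (𝔞 * 𝔟) i j = 𝔞 i j + (1 + 2 * 𝔞 j j) * 𝔟 i j := rfl

theorem MM.one_apply {n : ℕ} (i j : Fin n) : (1 : MM n) i j = 0 := rfl

theorem MM.ext {n : ℕ} {𝔞 𝔟 : MM n} (h : ∀ i j, 𝔞 i j = 𝔟 i j) : 𝔞 = 𝔟 :=
  funext fun i => funext fun j => h i j

instance (n : ℕ) : Monoid (MM n) where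
  mul_assoc a b c := MM.ext fun i j => by
    simp only [MM.mul_apply]; ring
  one_mul a := MM.ext fun i j => by simp only [MM.mul_apply, MM.one_apply]; ring
  mul_one a := MM.ext fun i j => by simp only [MM.mul_apply, MM.one_apply]; ring

/-- For an `n × n` integer matrix `𝔞 = [a_ij]`, the element
`a_i = (x_1²)^{a_i1} ⋯ (x_n²)^{a_in}` of `A_n ≤ G_n`. -/
def aElt (n : ℕ) (𝔞 : MM n) (i : Fin n) : HW n :=
  ((List.finRange n).map fun j => (x n j ^ 2) ^ 𝔞 i j).prod

/-- The quotient `W_n = G_n / A_n`. -/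
abbrev Wq (n : ℕ) : Type := HW n ⧸ A n

namespace HWaux

/-- sign character: x_k ↦ 1, x_j ↦ -1 for j ≠ k -/
def sHom (n : ℕ) (k : Fin n) : HW n →* ℤˣ :=
  PresentedGroup.toGroup (f := fun i => if i = k then 1 else -1) (by
    rintro r ⟨i, j, hij, rfl⟩
    simp only [map_mul, map_inv, map_pow, FreeGroup.lift_apply_of]
    generalize (if i = k then (1:ℤˣ) else -1) = a
    generalize (if j = k then (1:ℤˣ) else -1) = b
    have hb : b ^ 2 = 1 := by rcases Int.units_eq_one_or b with h | h <;> simp [h]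
    rw [hb]; group)

@[simp] theorem sHom_x (n : ℕ) (k i : Fin n) :
    sHom n k (x n i) = if i = k then 1 else -1 := by
  simp [sHom, x, PresentedGroup.toGroup.of]

theorem sHom_sq (n : ℕ) (k i : Fin n) : sHom n k (x n i ^ 2) = 1 := by
  rcases Int.units_eq_one_or (sHom n k (x n i)) with h | h <;> simp [h]

theorem sHom_inv (n : ℕ) (k : Fin n) (g : HW n) :
    sHom n k g⁻¹ = sHom n k g := by
  rw [map_inv]; rcases Int.units_eq_one_or (sHom n k g) with h | h <;> simp [h]

theorem conj_sq_x (n : ℕ) {k j : Fin n} :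
    x n k * x n j ^ 2 * (x n k)⁻¹ = (x n j ^ 2) ^ ((sHom n j (x n k) : ℤˣ) : ℤ) ∧
    (x n k)⁻¹ * x n j ^ 2 * x n k = (x n j ^ 2) ^ ((sHom n j (x n k) : ℤˣ) : ℤ) := by
  by_cases h : k = j
  · subst h; simp only [sHom_x, if_pos rfl]
    constructor <;> · norm_num; group
  · have hrel := HW.relation n h
    have e2 : (x n k)⁻¹ * x n j ^ 2 * x n k = (x n j ^ 2)⁻¹ :=
      mul_eq_one_iff_eq_inv.mp hrel
    have e1 : x n k * x n j ^ 2 * (x n k)⁻¹ = (x n j ^ 2)⁻¹ := by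
      have h3 : x n j ^ 2 = x n k * (x n j ^ 2)⁻¹ * (x n k)⁻¹ := by rw [← e2]; group
      calc x n k * x n j ^ 2 * (x n k)⁻¹
          = (x n k * (x n j ^ 2)⁻¹ * (x n k)⁻¹)⁻¹ := by group
        _ = (x n j ^ 2)⁻¹ := by rw [← h3]
    simp only [sHom_x, if_neg h, e1, e2]
    norm_num

/-- conjugation of `x_j ^ 2` by arbitrary `h` is given by the sign character. -/
theorem conj_sq (n : ℕ) (j : Fin n) (h : HW n) :
    h * x n j ^ 2 * h⁻¹ = (x n j ^ 2) ^ ((sHom n j h : ℤˣ) : ℤ) := by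
  let K : Subgroup (HW n) :=
    { carrier := {h | h * x n j ^ 2 * h⁻¹ = (x n j ^ 2) ^ ((sHom n j h : ℤˣ) : ℤ) ∧
        h⁻¹ * x n j ^ 2 * h = (x n j ^ 2) ^ ((sHom n j h : ℤˣ) : ℤ)}
      one_mem' := by constructor <;> simp
      mul_mem' := by
        rintro g h ⟨hg1, hg2⟩ ⟨hh1, hh2⟩
        have e1 : g * h * x n j ^ 2 * (g * h)⁻¹ = g * (h * x n j ^ 2 * h⁻¹) * g⁻¹ := by group
        have e2 : (g * h)⁻¹ * x n j ^ 2 * (g * h) = h⁻¹ * (g⁻¹ * x n j ^ 2 * g) * h := by group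
        constructor
        · rw [e1, hh1, ← conj_zpow, hg1, ← zpow_mul, map_mul, Units.val_mul, mul_comm]
        · have e3 : ∀ c : ℤ, h⁻¹ * (x n j ^ 2) ^ c * h = (h⁻¹ * (x n j ^ 2) * h) ^ c := by
            intro c
            simpa [inv_inv] using (map_zpow (MulAut.conj h⁻¹) (x n j ^ 2) c)
          rw [e2, hg2, e3, hh2, ← zpow_mul, map_mul, Units.val_mul, mul_comm]
      inv_mem' := by
        rintro g ⟨hg1, hg2⟩
        refine ⟨?_, ?_⟩
        · rw [inv_inv, sHom_inv]; exact hg2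
        · rw [inv_inv, sHom_inv]; exact hg1 }
  have hgen : ∀ i : Fin n, PresentedGroup.of (rels := HWrels n) i ∈ K := by
    intro i
    exact ⟨(conj_sq_x n (k := i) (j := j)).1, (conj_sq_x n (k := i) (j := j)).2⟩
  exact (PresentedGroup.generated_by (HWrels n) K hgen h).1


theorem conj_sq' (n : ℕ) (j : Fin n) (h : HW n) :
    h⁻¹ * x n j ^ 2 * h = (x n j ^ 2) ^ ((sHom n j h : ℤˣ) : ℤ) := by
  have h2 := conj_sq n j h⁻¹
  rwa [inv_inv, sHom_inv] at h2

theorem sq_comm (n : ℕ) (i j : Fin n) :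
    Commute (x n i ^ 2) (x n j ^ 2) := by
  have h := conj_sq' n j (x n i ^ 2)
  rw [sHom_sq] at h
  norm_num at h
  rw [Commute, SemiconjBy]
  calc x n i ^ 2 * x n j ^ 2
      = x n i ^ 2 * ((x n i ^ 2)⁻¹ * x n j ^ 2 * x n i ^ 2) := by rw [h]
    _ = x n j ^ 2 * x n i ^ 2 := by group

/-- product of squares with exponent vector `v` -/
def prodSq (n : ℕ) (v : Fin n → ℤ) : HW n :=
  ((List.finRange n).map fun j => (x n j ^ 2) ^ v j).prod

theorem aElt_eq (n : ℕ) (𝔞 : MM n) (i : Fin n) : aElt n 𝔞 i = prodSq n (𝔞 i) := rfl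

theorem prodSq_add (n : ℕ) (v w : Fin n → ℤ) :
    prodSq n (v + w) = prodSq n v * prodSq n w := by
  suffices h : ∀ l : List (Fin n),
      (l.map fun j => (x n j ^ 2) ^ (v + w) j).prod =
      (l.map fun j => (x n j ^ 2) ^ v j).prod * (l.map fun j => (x n j ^ 2) ^ w j).prod by
    exact h (List.finRange n)
  intro l
  induction l with
  | nil => simp
  | cons a l ih =>
    simp only [List.map_cons, List.prod_cons, ih]
    have hc : Commute ((x n a ^ 2) ^ w a) ((l.map fun j => (x n j ^ 2) ^ v j).prod) := by
      apply Commute.list_prod_right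
      intro y hy
      simp only [List.mem_map] at hy
      obtain ⟨j, -, rfl⟩ := hy
      exact (sq_comm n a j).zpow_zpow _ _
    rw [Pi.add_apply, zpow_add]
    exact hc.mul_mul_mul_comm _ _

theorem prodSq_zero (n : ℕ) : prodSq n 0 = 1 := by
  simp [prodSq]

theorem prodSq_neg (n : ℕ) (v : Fin n → ℤ) : prodSq n (-v) = (prodSq n v)⁻¹ := by
  have h := (prodSq_add n v (-v)).symm
  rw [add_neg_cancel, prodSq_zero] at h
  exact eq_inv_of_mul_eq_one_right h

theorem prodSq_mem (n : ℕ) (v : Fin n → ℤ) : prodSq n v ∈ A n := by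
  apply Subgroup.list_prod_mem
  intro y hy
  simp only [List.mem_map] at hy
  obtain ⟨j, -, rfl⟩ := hy
  exact Subgroup.zpow_mem (A n) (Subgroup.subset_closure (Set.mem_range_self j)) (v j)

theorem prodSq_single (n : ℕ) (j : Fin n) (c : ℤ) :
    prodSq n (Pi.single j c) = (x n j ^ 2) ^ c := by
  unfold prodSq
  have h := List.prod_map_eq_pow_single (l := List.finRange n) j
    (fun k => (x n k ^ 2) ^ ((Pi.single j c : Fin n → ℤ) k))
    (fun k hk _ => by simp [Pi.single_eq_of_ne hk])
  rw [h, List.count_eq_one_of_mem (List.nodup_finRange n) (List.mem_finRange j)]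
  simp

theorem mem_A_exists {n : ℕ} {a : HW n} (ha : a ∈ A n) : ∃ v, a = prodSq n v := by
  refine Subgroup.closure_induction (p := fun a _ => ∃ v, a = prodSq n v) ?_ ?_ ?_ ?_ ha
  · rintro b ⟨j, rfl⟩
    exact ⟨Pi.single j 1, by simp [prodSq_single]⟩
  · exact ⟨0, (prodSq_zero n).symm⟩
  · rintro b c _ _ ⟨v, rfl⟩ ⟨w, rfl⟩
    exact ⟨v + w, (prodSq_add n v w).symm⟩
  · rintro b _ ⟨v, rfl⟩
    exact ⟨-v, (prodSq_neg n v).symm⟩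

/-- exponent detecting homomorphism into the infinite dihedral group -/
def rho (n : ℕ) (k : Fin n) : HW n →* DihedralGroup 0 :=
  PresentedGroup.toGroup (f := fun i => if i = k then .r 1 else .sr 0) (by
    rintro r ⟨i, j, hij, rfl⟩
    simp only [map_mul, map_inv, map_pow, FreeGroup.lift_apply_of]
    have hsr_inv : (DihedralGroup.sr (0 : ZMod 0))⁻¹ = DihedralGroup.sr 0 :=
      inv_eq_of_mul_eq_one_right (DihedralGroup.sr_mul_self 0)
    by_cases hj : j = k
    · subst hj
      rw [if_pos rfl, if_neg hij, pow_two, hsr_inv, DihedralGroup.r_mul_r,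
        DihedralGroup.sr_mul_r, DihedralGroup.sr_mul_sr, DihedralGroup.r_mul_r,
        DihedralGroup.one_def]
      norm_num
    · rw [if_neg hj, pow_two, DihedralGroup.sr_mul_self]
      generalize (if i = k then (DihedralGroup.r 1 : DihedralGroup 0) else .sr 0) = a
      group)

theorem rho_x (n : ℕ) (k i : Fin n) :
    rho n k (x n i) = if i = k then .r 1 else .sr 0 := by
  simp [rho, x, PresentedGroup.toGroup.of]

theorem r_inv (a : ZMod 0) : (DihedralGroup.r a : DihedralGroup 0)⁻¹ = .r (-a) := by
  apply inv_eq_of_mul_eq_one_right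
  rw [DihedralGroup.r_mul_r, add_neg_cancel, DihedralGroup.one_def]

theorem r_pow (a : ZMod 0) (m : ℕ) :
    (DihedralGroup.r a : DihedralGroup 0) ^ m = .r (m • a) := by
  induction m with
  | zero => simp
  | succ m ih =>
    rw [pow_succ, ih, DihedralGroup.r_mul_r, succ_nsmul]

theorem r_zpow (a : ZMod 0) (c : ℤ) :
    (DihedralGroup.r a : DihedralGroup 0) ^ c = .r (c • a) := by
  cases c with
  | ofNat m => rw [Int.ofNat_eq_coe, zpow_natCast, r_pow, natCast_zsmul]
  | negSucc m =>
    rw [zpow_negSucc, r_pow, r_inv, negSucc_zsmul]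

theorem rho_sq (n : ℕ) (k i : Fin n) :
    rho n k (x n i ^ 2) = if i = k then .r 2 else 1 := by
  rw [map_pow, rho_x]
  by_cases h : i = k
  · rw [if_pos h, if_pos h, pow_two, DihedralGroup.r_mul_r]; norm_num
  · rw [if_neg h, if_neg h, pow_two, DihedralGroup.sr_mul_self]

theorem rho_prodSq (n : ℕ) (k : Fin n) (v : Fin n → ℤ) :
    rho n k (prodSq n v) = .r ((2 * v k : ℤ) : ZMod 0) := by
  unfold prodSq
  rw [map_list_prod, List.map_map]
  have hfun : ∀ j, (rho n k ∘ fun j => (x n j ^ 2) ^ v j) j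
      = (if j = k then DihedralGroup.r 2 else 1) ^ v j := by
    intro j
    simp only [Function.comp_apply, map_zpow, rho_sq]
  rw [List.map_congr_left (fun j _ => hfun j)]
  have hf : ∀ j, j ≠ k → j ∈ List.finRange n →
      (fun j => (if j = k then DihedralGroup.r (2 : ZMod 0) else 1) ^ v j) j = 1 := by
    intro j hj _
    beta_reduce
    rw [if_neg hj]
    exact one_zpow (v j)
  have h := List.prod_map_eq_pow_single (l := List.finRange n) k
    (fun j => (if j = k then DihedralGroup.r 2 else 1) ^ v j) hf
  rw [h, List.count_eq_one_of_mem (List.nodup_finRange n) (List.mem_finRange k)]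
  rw [pow_one]
  beta_reduce
  rw [if_pos rfl, r_zpow]
  congr 1
  show (v k • (2:ℤ)) = 2 * v k
  rw [smul_eq_mul]
  ring

theorem prodSq_inj {n : ℕ} {v w : Fin n → ℤ} (h : prodSq n v = prodSq n w) : v = w := by
  funext k
  have h2 : rho n k (prodSq n v) = rho n k (prodSq n w) := by rw [h]
  rw [rho_prodSq, rho_prodSq] at h2
  have h4 := DihedralGroup.r.inj h2
  norm_cast at h4
  have h5 : (2 * v k : ℤ) = 2 * w k := h4
  omega

theorem prodSq_eq_one {n : ℕ} {v : Fin n → ℤ} (h : prodSq n v = 1) : v = 0 := by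
  apply prodSq_inj
  rw [h, prodSq_zero]


theorem conj_prodSq (n : ℕ) (v : Fin n → ℤ) (h : HW n) :
    h * prodSq n v * h⁻¹ = prodSq n (fun k => ((sHom n k h : ℤˣ) : ℤ) * v k) := by
  have e1 : h * prodSq n v * h⁻¹ = MulAut.conj h (prodSq n v) := rfl
  rw [e1]
  unfold prodSq
  rw [map_list_prod, List.map_map]
  congr 1
  apply List.map_congr_left
  intro k _
  show MulAut.conj h ((x n k ^ 2) ^ v k) = _
  rw [map_zpow, MulAut.conj_apply, conj_sq n k h, ← zpow_mul]

theorem conj_prodSq' (n : ℕ) (v : Fin n → ℤ) (h : HW n) :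
    h⁻¹ * prodSq n v * h = prodSq n (fun k => ((sHom n k h : ℤˣ) : ℤ) * v k) := by
  have h2 := conj_prodSq n v h⁻¹
  rw [inv_inv] at h2
  simp only [sHom_inv] at h2
  exact h2

theorem translate_sq (n : ℕ) (j : Fin n) (v : Fin n → ℤ) :
    (x n j * prodSq n v) ^ 2 = (x n j ^ 2) ^ (1 + 2 * v j) := by
  have e : (x n j * prodSq n v) ^ 2
      = x n j ^ 2 * (((x n j)⁻¹ * prodSq n v * x n j) * prodSq n v) := by
    rw [pow_two]; group
  rw [e, conj_prodSq', ← prodSq_add]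
  have e2 : (fun k => ((sHom n k (x n j) : ℤˣ) : ℤ) * v k) + v
      = Pi.single j (2 * v j) := by
    funext k
    by_cases hk : k = j
    · subst hk
      rw [Pi.add_apply, sHom_x, if_pos rfl, Pi.single_eq_same, Units.val_one]
      ring
    · rw [Pi.add_apply, sHom_x, if_neg (Ne.symm hk), Pi.single_eq_of_ne hk]
      simp
  rw [e2, prodSq_single, zpow_add, zpow_one]

theorem conjClass_finite_of_mem_A {n : ℕ} {a : HW n} (ha : a ∈ A n) :
    (Set.range fun h : HW n => h * a * h⁻¹).Finite := by
  obtain ⟨v, rfl⟩ := mem_A_exists ha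
  have hsub : (Set.range fun h : HW n => h * prodSq n v * h⁻¹)
      ⊆ (fun s : Fin n → ℤˣ => prodSq n fun k => ((s k : ℤˣ) : ℤ) * v k) '' Set.univ := by
    rintro _ ⟨h, rfl⟩
    exact ⟨fun k => sHom n k h, trivial, (conj_prodSq n v h).symm⟩
  exact (Set.finite_univ.image _).subset hsub

abbrev C2 := Multiplicative (ZMod 2)

def τ : C2 := Multiplicative.ofAdd 1

theorem τ_sq : τ ^ 2 = 1 := by decide

theorem τ_ne_one : τ ≠ 1 := by decide

theorem C2_cases (c : C2) : c = 1 ∨ c = τ := by revert c; decide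

/-- hom from C2 determined by an element of order dividing 2 -/
def homC2 {H : Type*} [Group H] (h : H) (hh : h ^ 2 = 1) : C2 →* H where
  toFun c := h ^ (ZMod.val c.toAdd)
  map_one' := by
    show h ^ (ZMod.val (0 : ZMod 2)) = 1
    simp [ZMod.val_zero]
  map_mul' a b := by
    show h ^ (ZMod.val (a.toAdd + b.toAdd)) = _
    have key : ∀ m : ℕ, h ^ m = h ^ (m % 2) := by
      intro m
      conv_lhs => rw [← Nat.div_add_mod m 2]
      rw [pow_add, pow_mul, hh, one_pow, one_mul]
    rw [ZMod.val_add, ← key, ← pow_add]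

theorem homC2_τ {H : Type*} [Group H] (h : H) (hh : h ^ 2 = 1) : homC2 h hh τ = h := by
  show h ^ (ZMod.val (1 : ZMod 2)) = h
  rw [ZMod.val_one, pow_one]

theorem homC2_ext {H : Type*} [Group H] {f g : C2 →* H} (h : f τ = g τ) : f = g := by
  refine MonoidHom.ext fun c => ?_
  rcases C2_cases c with rfl | rfl
  · rw [map_one, map_one]
  · exact h

abbrev P (n : ℕ) := Monoid.CoprodI (fun _ : Fin n => C2)

def genP (n : ℕ) (i : Fin n) : P n := Monoid.CoprodI.of (i := i) τ

theorem genP_sq (n : ℕ) (i : Fin n) : genP n i ^ 2 = 1 := by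
  rw [genP, ← map_pow, τ_sq, map_one]

/-- the projection HW n → P n -/
def θ (n : ℕ) : HW n →* P n :=
  PresentedGroup.toGroup (f := fun i => genP n i) (by
    rintro r ⟨i, j, hij, rfl⟩
    simp only [map_mul, map_inv, map_pow, FreeGroup.lift_apply_of]
    rw [genP_sq]
    group)

theorem θ_x (n : ℕ) (i : Fin n) : θ n (x n i) = genP n i :=
  PresentedGroup.toGroup.of _

theorem θ_A {n : ℕ} {a : HW n} (ha : a ∈ A n) : θ n a = 1 := by
  have : A n ≤ (θ n).ker := by
    rw [A, Subgroup.closure_le]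
    rintro _ ⟨i, rfl⟩
    beta_reduce
    rw [SetLike.mem_coe, MonoidHom.mem_ker, map_pow, θ_x, genP_sq]
  exact this ha

theorem mk_x_sq (n : ℕ) (i : Fin n) : (QuotientGroup.mk (x n i) : Wq n) ^ 2 = 1 := by
  rw [← QuotientGroup.mk_pow]
  exact (QuotientGroup.eq_one_iff _).mpr (Subgroup.subset_closure (Set.mem_range_self i))

/-- the section P n → Wq n -/
def ψ (n : ℕ) : P n →* Wq n :=
  Monoid.CoprodI.lift (fun i => homC2 (QuotientGroup.mk (x n i)) (mk_x_sq n i))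

theorem ψ_genP (n : ℕ) (i : Fin n) : ψ n (genP n i) = QuotientGroup.mk (x n i) := by
  rw [ψ, genP, Monoid.CoprodI.lift_of, homC2_τ]

/-- the induced map Wq n → P n -/
def θbar (n : ℕ) : Wq n →* P n :=
  QuotientGroup.lift (A n) (θ n) (fun a ha => θ_A ha)

theorem θbar_mk (n : ℕ) (g : HW n) : θbar n (QuotientGroup.mk g) = θ n g := rfl

theorem ψ_θ (n : ℕ) (g : HW n) : ψ n (θ n g) = QuotientGroup.mk g := by
  have h : (ψ n).comp (θ n) = QuotientGroup.mk' (A n) := by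
    apply PresentedGroup.ext
    intro i
    show ψ n (θ n (PresentedGroup.of i)) = _
    rw [show (PresentedGroup.of i : HW n) = x n i from rfl, θ_x, ψ_genP]
    rfl
  exact DFunLike.congr_fun h g

theorem ψ_θbar (n : ℕ) (w : Wq n) : ψ n (θbar n w) = w := by
  induction w using QuotientGroup.induction_on with
  | H g => rw [θbar_mk, ψ_θ]

theorem θbar_ψ (n : ℕ) : (θbar n).comp (ψ n) = MonoidHom.id (P n) := by
  apply Monoid.CoprodI.ext_hom
  intro i
  apply homC2_ext
  show θbar n (ψ n (genP n i)) = genP n i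
  rw [ψ_genP, θbar_mk, θ_x]

theorem θbar_injective (n : ℕ) : Function.Injective (θbar n) :=
  Function.LeftInverse.injective (ψ_θbar n)

theorem θbar_surjective (n : ℕ) : Function.Surjective (θbar n) := by
  intro p
  exact ⟨ψ n p, DFunLike.congr_fun (θbar_ψ n) p⟩

theorem θ_surjective (n : ℕ) : Function.Surjective (θ n) := by
  intro p
  obtain ⟨w, hw⟩ := θbar_surjective n p
  induction w using QuotientGroup.induction_on with
  | H g => exact ⟨g, hw⟩

theorem mk_eq_one_iff_mem_A {n : ℕ} (g : HW n) :
    (QuotientGroup.mk g : Wq n) = 1 ↔ g ∈ A n := QuotientGroup.eq_one_iff g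

theorem θ_eq_one_iff {n : ℕ} (g : HW n) : θ n g = 1 ↔ g ∈ A n := by
  constructor
  · intro h
    rw [← mk_eq_one_iff_mem_A]
    apply θbar_injective n
    rw [θbar_mk, h, map_one]
  · exact θ_A

open Monoid.CoprodI in
/-- products of generators over an index list -/
def eList (n : ℕ) (l : List (Fin n)) : P n := (l.map fun i => genP n i).prod

theorem eList_nil (n : ℕ) : eList n [] = 1 := rfl

theorem eList_cons (n : ℕ) (i : Fin n) (l : List (Fin n)) :
    eList n (i :: l) = genP n i * eList n l := by
  simp [eList]

theorem eList_singleton (n : ℕ) (i : Fin n) : eList n [i] = genP n i := by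
  simp [eList]

theorem eList_append (n : ℕ) (l₁ l₂ : List (Fin n)) :
    eList n (l₁ ++ l₂) = eList n l₁ * eList n l₂ := by
  simp [eList]

theorem genP_inv (n : ℕ) (i : Fin n) : (genP n i)⁻¹ = genP n i := by
  apply inv_eq_of_mul_eq_one_right
  rw [← pow_two]
  exact genP_sq n i

theorem eList_reverse (n : ℕ) (l : List (Fin n)) :
    eList n l.reverse = (eList n l)⁻¹ := by
  induction l with
  | nil => simp [eList]
  | cons a l ih =>
    rw [List.reverse_cons, eList_append, ih, eList_singleton, eList_cons, mul_inv_rev, genP_inv]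

/-- the reduced word associated to a list with no two adjacent equal letters -/
def wordOf {n : ℕ} (l : List (Fin n)) (hl : l.Chain' (· ≠ ·)) :
    Monoid.CoprodI.Word (fun _ : Fin n => C2) where
  toList := l.map fun i => ⟨i, τ⟩
  ne_one := by
    intro s hs
    simp only [List.mem_map] at hs
    obtain ⟨i, -, rfl⟩ := hs
    exact τ_ne_one
  chain_ne := by
    rw [List.isChain_map]
    exact hl

theorem prod_wordOf {n : ℕ} (l : List (Fin n)) (hl : l.Chain' (· ≠ ·)) :
    (wordOf l hl).prod = eList n l := by
  simp only [Monoid.CoprodI.Word.prod, wordOf, List.map_map, eList]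
  rfl

theorem eList_inj {n : ℕ} {l l' : List (Fin n)} (hl : l.Chain' (· ≠ ·))
    (hl' : l'.Chain' (· ≠ ·)) (h : eList n l = eList n l') : l = l' := by
  have hw : wordOf l hl = wordOf l' hl' := by
    apply (Monoid.CoprodI.Word.equiv (M := fun _ : Fin n => C2)).symm.injective
    show (wordOf l hl).prod = (wordOf l' hl').prod
    rw [prod_wordOf, prod_wordOf, h]
  have h3 := congrArg
    (fun w : Monoid.CoprodI.Word (fun _ : Fin n => C2) => w.toList.map Sigma.fst) hw
  simp only [wordOf, List.map_map] at h3
  have h2 : ∀ (L : List (Fin n)),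
      L.map (Sigma.fst ∘ fun i => (⟨i, τ⟩ : (_ : Fin n) × C2)) = L := by
    intro L
    induction L with
    | nil => rfl
    | cons c L ih => simp only [List.map_cons, ih]; rfl
  rw [h2, h2] at h3
  exact h3

theorem exists_red {n : ℕ} (p : P n) :
    ∃ l : List (Fin n), l.Chain' (· ≠ ·) ∧ eList n l = p := by
  set w := Monoid.CoprodI.Word.equiv (M := fun _ : Fin n => C2) p with hw
  refine ⟨w.toList.map Sigma.fst, ?_, ?_⟩
  · unfold List.Chain'; rw [List.isChain_map]
    exact w.chain_ne
  · have hsnd : ∀ s ∈ w.toList, s.snd = τ := by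
      intro s hs
      rcases C2_cases s.snd with h1 | h1
      · exact absurd h1 (w.ne_one s hs)
      · exact h1
    have : eList n (w.toList.map Sigma.fst) = w.prod := by
      unfold eList Monoid.CoprodI.Word.prod
      rw [List.map_map]
      apply congrArg
      apply List.map_congr_left
      intro s hs
      show genP n s.fst = Monoid.CoprodI.of (M := fun _ : Fin n => C2) (i := s.fst) s.snd
      rw [hsnd s hs]
      rfl
    rw [this]
    exact (Monoid.CoprodI.Word.equiv (M := fun _ : Fin n => C2)).symm_apply_apply p

theorem eList_ne_one {n : ℕ} {l : List (Fin n)} (hl : l.Chain' (· ≠ ·)) (hne : l ≠ []) :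
    eList n l ≠ 1 := by
  intro h
  exact hne (eList_inj hl List.isChain_nil (h.trans (eList_nil n).symm))

/-- alternating list -/
def altL {n : ℕ} (a b : Fin n) : ℕ → List (Fin n)
  | 0 => []
  | m + 1 => a :: b :: altL a b m

theorem altL_length {n : ℕ} (a b : Fin n) (m : ℕ) : (altL a b m).length = 2 * m := by
  induction m with
  | zero => rfl
  | succ m ih => simp only [altL, List.length_cons, ih]; omega

theorem altL_head? {n : ℕ} (a b : Fin n) (m : ℕ) :
    (altL a b m).head? = if m = 0 then none else some a := by
  cases m <;> rfl

theorem altL_getLast? {n : ℕ} (a b : Fin n) (m : ℕ) :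
    (altL a b m).getLast? = if m = 0 then none else some b := by
  induction m with
  | zero => rfl
  | succ m ih =>
    show (a :: b :: altL a b m).getLast? = some b
    rw [List.getLast?_cons_cons]
    cases m with
    | zero => rfl
    | succ m =>
      show (b :: a :: b :: altL a b m).getLast? = some b
      rw [List.getLast?_cons_cons, List.getLast?_cons_cons]
      have := ih
      rwa [if_neg (Nat.succ_ne_zero m)] at this
      
theorem altL_chain' {n : ℕ} {a b : Fin n} (hab : a ≠ b) (m : ℕ) :
    (altL a b m).Chain' (· ≠ ·) := by
  induction m with
  | zero => exact List.isChain_nil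
  | succ m ih =>
    show ((a :: b :: altL a b m)).Chain' (· ≠ ·)
    unfold List.Chain'; rw [List.isChain_cons_cons]
    refine ⟨hab, ?_⟩
    rw [List.isChain_cons]
    refine ⟨?_, ih⟩
    intro y hy
    rw [altL_head?] at hy
    rcases Nat.eq_zero_or_pos m with hm | hm
    · rw [if_pos hm] at hy; cases hy
    · rw [if_neg (Nat.pos_iff_ne_zero.mp hm)] at hy
      cases hy
      exact hab.symm

theorem infinite_conjClass_P {n : ℕ} (hn : 3 ≤ n) {p : P n} (hp : p ≠ 1) :
    (Set.range fun q : P n => q * p * q⁻¹).Infinite := by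
  obtain ⟨l, hl, rfl⟩ := exists_red p
  have hlne : l ≠ [] := by
    rintro rfl
    exact hp (eList_nil n)
  -- choose b different from head and last, and a different from b
  obtain ⟨b, hb1, hb2⟩ : ∃ b : Fin n, b ≠ l.head hlne ∧ b ≠ l.getLast hlne := by
    by_contra hcon
    push_neg at hcon
    have hsub : (Finset.univ : Finset (Fin n)) ⊆ {l.head hlne, l.getLast hlne} := by
      intro c _
      by_cases h : c = l.head hlne
      · simp [h]
      · simp [hcon c h]
    have := Finset.card_le_card hsub
    simp only [Finset.card_univ, Fintype.card_fin] at this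
    have h2 : ({l.head hlne, l.getLast hlne} : Finset (Fin n)).card ≤ 2 :=
      (Finset.card_insert_le _ _).trans (by simp)
    omega
  obtain ⟨a, hab⟩ : ∃ a : Fin n, a ≠ b := by
    by_contra hcon
    push_neg at hcon
    have hsub : (Finset.univ : Finset (Fin n)) ⊆ {b} := by
      intro c _
      simp [hcon c]
    have := Finset.card_le_card hsub
    simp only [Finset.card_univ, Fintype.card_fin, Finset.card_singleton] at this
    omega
  -- the conjugating elements
  have hLred : ∀ m : ℕ, (altL a b m ++ (l ++ (altL a b m).reverse)).Chain' (· ≠ ·) := by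
    intro m
    unfold List.Chain'; rw [List.isChain_append]
    refine ⟨altL_chain' hab m, ?_, ?_⟩
    · rw [List.isChain_append]
      refine ⟨hl, ?_, ?_⟩
      · rw [List.isChain_reverse]
        exact List.IsChain.imp (fun a b h => h.symm) (altL_chain' hab m)
      · intro u hu y hy
        rw [List.head?_reverse, altL_getLast?] at hy
        rcases Nat.eq_zero_or_pos m with hm | hm
        · rw [if_pos hm] at hy; cases hy
        · rw [if_neg (Nat.pos_iff_ne_zero.mp hm)] at hy
          cases hy
          rw [List.getLast?_eq_getLast hlne] at hu
          cases hu
          exact hb2.symm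
    · intro u hu y hy
      rw [altL_getLast?] at hu
      rcases Nat.eq_zero_or_pos m with hm | hm
      · rw [if_pos hm] at hu; cases hu
      · rw [if_neg (Nat.pos_iff_ne_zero.mp hm)] at hu
        cases hu
        rw [List.head?_append_of_ne_nil _ hlne, List.head?_eq_head hlne] at hy
        cases hy
        exact hb1
  apply Set.infinite_of_injective_forall_mem
    (f := fun m : ℕ => eList n (altL a b m) * eList n l * (eList n (altL a b m))⁻¹)
  · intro m m' hmm
    have he : eList n (altL a b m ++ (l ++ (altL a b m).reverse))
        = eList n (altL a b m' ++ (l ++ (altL a b m').reverse)) := by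
      rw [eList_append, eList_append, eList_reverse, eList_append, eList_append, eList_reverse,
        ← mul_assoc, ← mul_assoc]
      exact hmm
    have := eList_inj (hLred m) (hLred m') he
    have hlen := congrArg List.length this
    simp only [List.length_append, List.length_reverse, altL_length] at hlen
    omega
  · intro m
    exact ⟨eList n (altL a b m), rfl⟩

theorem invol_red {n : ℕ} : ∀ (m : ℕ) (l : List (Fin n)), l.length ≤ m →
    l.Chain' (· ≠ ·) → eList n l ≠ 1 → (eList n l) ^ 2 = 1 →
    ∃ (q : P n) (i : Fin n), eList n l = q * genP n i * q⁻¹ := by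
  intro m
  induction m with
  | zero =>
    intro l hlen _ hne _
    rw [Nat.le_zero, List.length_eq_zero_iff] at hlen
    exact absurd (hlen ▸ eList_nil n) hne
  | succ m ih =>
    intro l hlen hred hne hsq
    match l, hlen with
    | [], _ => exact absurd (eList_nil n) hne
    | c :: t, hlen =>
      have hlne : (c :: t) ≠ [] := List.cons_ne_nil c t
      by_cases hct : t = []
      · subst hct
        exact ⟨1, c, by rw [eList_singleton]; group⟩
      -- l has length ≥ 2
      have hcases : c = (c :: t).getLast hlne := by
        by_contra hne2
        have happ : ((c :: t) ++ (c :: t)).Chain' (· ≠ ·) := by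
          unfold List.Chain'; rw [List.isChain_append]
          refine ⟨hred, hred, ?_⟩
          intro u hu y hy
          rw [List.getLast?_eq_getLast hlne] at hu
          rw [List.head?_cons] at hy
          cases hu; cases hy
          exact fun h => hne2 h.symm
        have h1 : eList n ((c :: t) ++ (c :: t)) = eList n [] := by
          rw [eList_append, eList_nil, ← pow_two]
          exact hsq
        have hll := congrArg List.length (eList_inj happ List.isChain_nil h1)
        simp only [List.length_append, List.length_cons, List.length_nil] at hll
        omega
      -- now strip the first and last letter
      have ht_decomp : t = t.dropLast ++ [t.getLast hct] := (List.dropLast_append_getLast hct).symm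
      have hgl : (c :: t).getLast hlne = t.getLast hct := List.getLast_cons hct
      set mid := t.dropLast with hmid
      have hdecomp : c :: t = c :: (mid ++ [c]) := by
        nth_rewrite 1 [ht_decomp]
        rw [← hgl, ← hcases]
      have hredmid : mid.Chain' (· ≠ ·) := by
        have h1 : t.IsChain (· ≠ ·) := List.IsChain.tail hred
        rw [ht_decomp, List.isChain_append] at h1
        exact h1.1
      have hlenmid : mid.length ≤ m := by
        have h1 := congrArg List.length ht_decomp
        simp only [List.length_append, List.length_singleton] at h1
        simp only [List.length_cons] at hlen
        omega
      have gg : genP n c * genP n c = 1 := by rw [← pow_two]; exact genP_sq n c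
      have hqeq : eList n (c :: t) = genP n c * eList n mid * genP n c := by
        rw [hdecomp, eList_cons, eList_append, eList_singleton, mul_assoc]
      have hq1 : eList n mid = genP n c * eList n (c :: t) * genP n c := by
        rw [hqeq]
        rw [show genP n c * (genP n c * eList n mid * genP n c) * genP n c
          = (genP n c * genP n c) * eList n mid * (genP n c * genP n c) from by group, gg,
          one_mul, mul_one]
      have hqsq : (eList n mid) ^ 2 = 1 := by
        rw [pow_two, hq1]
        rw [show genP n c * eList n (c :: t) * genP n c * (genP n c * eList n (c :: t) * genP n c)
          = genP n c * eList n (c :: t) * (genP n c * genP n c) * eList n (c :: t) * genP n c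
          from by group, gg, mul_one]
        rw [show genP n c * eList n (c :: t) * eList n (c :: t) * genP n c
          = genP n c * (eList n (c :: t) * eList n (c :: t)) * genP n c from by group,
          ← pow_two, hsq, mul_one, gg]
      have hqne : eList n mid ≠ 1 := by
        intro h
        exact hne (by rw [hqeq, h, mul_one, gg])
      obtain ⟨u, i, hu⟩ := ih mid hlenmid hredmid hqne hqsq
      refine ⟨genP n c * u, i, ?_⟩
      rw [hqeq, hu, mul_inv_rev, genP_inv]
      group

theorem invol_P {n : ℕ} {p : P n} (hpne : p ≠ 1) (hsq : p ^ 2 = 1) :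
    ∃ (q : P n) (i : Fin n), p = q * genP n i * q⁻¹ := by
  obtain ⟨l, hl, rfl⟩ := exists_red p
  exact invol_red l.length l le_rfl hl hpne hsq

theorem mem_A_iff_finite {n : ℕ} (hn : 3 ≤ n) (g : HW n) :
    g ∈ A n ↔ (Set.range fun h : HW n => h * g * h⁻¹).Finite := by
  constructor
  · exact conjClass_finite_of_mem_A
  · intro hfin
    by_contra hg
    have hθg : θ n g ≠ 1 := fun h => hg ((θ_eq_one_iff g).mp h)
    have hinf := infinite_conjClass_P hn hθg
    have himg : (Set.range fun q : P n => q * θ n g * q⁻¹)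
        = θ n '' (Set.range fun h : HW n => h * g * h⁻¹) := by
      ext p
      constructor
      · rintro ⟨q, rfl⟩
        obtain ⟨h, rfl⟩ := θ_surjective n q
        exact ⟨h * g * h⁻¹, ⟨h, rfl⟩, by simp [map_mul, map_inv]⟩
      · rintro ⟨-, ⟨h, rfl⟩, rfl⟩
        exact ⟨θ n h, by simp [map_mul, map_inv]⟩
    rw [himg] at hinf
    exact hinf (hfin.image _)

theorem A_char {n : ℕ} (hn : 3 ≤ n) (α : MulAut (HW n)) {a : HW n} (ha : a ∈ A n) :
    α a ∈ A n := by
  rw [mem_A_iff_finite hn]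
  have himg : (Set.range fun h : HW n => h * α a * h⁻¹)
      = (α : HW n → HW n) '' (Set.range fun h : HW n => h * a * h⁻¹) := by
    ext p
    constructor
    · rintro ⟨h, rfl⟩
      exact ⟨α.symm h * a * (α.symm h)⁻¹, ⟨α.symm h, rfl⟩, by
        simp [map_mul, map_inv, MulEquiv.apply_symm_apply]⟩
    · rintro ⟨-, ⟨h, rfl⟩, rfl⟩
      exact ⟨α h, by simp [map_mul, map_inv]⟩
  rw [himg]
  exact (conjClass_finite_of_mem_A ha).image _

/-- the induced endomorphism of the quotient -/
def Φ {n : ℕ} (hn : 3 ≤ n) (α : MulAut (HW n)) : Wq n →* Wq n :=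
  QuotientGroup.lift (A n) ((QuotientGroup.mk' (A n)).comp α.toMonoidHom)
    (fun a ha => (QuotientGroup.eq_one_iff _).mpr (A_char hn α ha))

theorem Φ_mk {n : ℕ} (hn : 3 ≤ n) (α : MulAut (HW n)) (g : HW n) :
    Φ hn α (QuotientGroup.mk g) = QuotientGroup.mk (α g) := rfl

theorem Wq_hom_ext {n : ℕ} {H : Type*} [Group H] {f g : Wq n →* H}
    (h : ∀ i, f (QuotientGroup.mk (x n i)) = g (QuotientGroup.mk (x n i))) : f = g := by
  apply QuotientGroup.monoidHom_ext
  apply PresentedGroup.ext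
  intro i
  exact h i

/-- the induced automorphism of the quotient -/
def πAut {n : ℕ} (hn : 3 ≤ n) (α : MulAut (HW n)) : MulAut (Wq n) where
  toFun := Φ hn α
  invFun := Φ hn α⁻¹
  left_inv := fun w => by
    induction w using QuotientGroup.induction_on with
    | H g =>
      rw [Φ_mk, Φ_mk, MulAut.inv_def, MulEquiv.symm_apply_apply]
  right_inv := fun w => by
    induction w using QuotientGroup.induction_on with
    | H g =>
      rw [Φ_mk, Φ_mk, MulAut.inv_def, MulEquiv.apply_symm_apply]
  map_mul' := map_mul (Φ hn α)

theorem πAut_mk {n : ℕ} (hn : 3 ≤ n) (α : MulAut (HW n)) (g : HW n) :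
    πAut hn α (QuotientGroup.mk g) = QuotientGroup.mk (α g) := rfl

/-- π as homomorphism -/
def πHom (n : ℕ) (hn : 3 ≤ n) : MulAut (HW n) →* MulAut (Wq n) where
  toFun := πAut hn
  map_one' := by
    apply MulEquiv.ext
    intro w
    induction w using QuotientGroup.induction_on with
    | H g => rfl
  map_mul' := fun α β => by
    apply MulEquiv.ext
    intro w
    induction w using QuotientGroup.induction_on with
    | H g => rfl

/-- abelianization characters with values in C2 -/
def ξ (n : ℕ) (k : Fin n) : HW n →* C2 :=
  PresentedGroup.toGroup (f := fun i => if i = k then τ else 1) (by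
    rintro r ⟨i, j, hij, rfl⟩
    simp only [map_mul, map_inv, map_pow, FreeGroup.lift_apply_of]
    have h2 : ∀ c : C2, c ^ 2 = 1 := by decide
    rw [h2]
    group)

theorem ξ_x (n : ℕ) (k i : Fin n) : ξ n k (x n i) = if i = k then τ else 1 := by
  simp [ξ, x, PresentedGroup.toGroup.of]

theorem ξ_A {n : ℕ} (k : Fin n) {a : HW n} (ha : a ∈ A n) : ξ n k a = 1 := by
  have hle : A n ≤ (ξ n k).ker := by
    rw [A, Subgroup.closure_le]
    rintro - ⟨i, rfl⟩
    beta_reduce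
    rw [SetLike.mem_coe, MonoidHom.mem_ker, map_pow]
    have h2 : ∀ c : C2, c ^ 2 = 1 := by decide
    exact h2 _
  exact hle ha

def ξbar (n : ℕ) (k : Fin n) : Wq n →* C2 :=
  QuotientGroup.lift (A n) (ξ n k) (fun a ha => ξ_A k ha)

theorem ξbar_mk (n : ℕ) (k : Fin n) (g : HW n) :
    ξbar n k (QuotientGroup.mk g) = ξ n k g := rfl

theorem sHom_A {n : ℕ} (k : Fin n) {a : HW n} (ha : a ∈ A n) : sHom n k a = 1 := by
  have hle : A n ≤ (sHom n k).ker := by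
    rw [A, Subgroup.closure_le]
    rintro - ⟨i, rfl⟩
    beta_reduce
    rw [SetLike.mem_coe, MonoidHom.mem_ker]
    exact sHom_sq n k i
  exact hle ha

def sbar (n : ℕ) (k : Fin n) : Wq n →* ℤˣ :=
  QuotientGroup.lift (A n) (sHom n k) (fun a ha => sHom_A k ha)

theorem sbar_mk (n : ℕ) (k : Fin n) (g : HW n) :
    sbar n k (QuotientGroup.mk g) = sHom n k g := rfl

theorem conj_zpow' {G : Type*} [Group G] (g a : G) (c : ℤ) :
    g⁻¹ * a ^ c * g = (g⁻¹ * a * g) ^ c := by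
  simpa [inv_inv] using (map_zpow (MulAut.conj g⁻¹) a c)

/-- a "translation-like" endomorphism acts on products of squares -/
theorem endo_prodSq {n : ℕ} (φ : HW n →* HW n) (v : Fin n → (Fin n → ℤ))
    (hv : ∀ j, φ (x n j) = x n j * prodSq n (v j)) (w : Fin n → ℤ) :
    φ (prodSq n w) = prodSq n (fun j => (1 + 2 * v j j) * w j) := by
  unfold prodSq
  rw [map_list_prod, List.map_map]
  congr 1
  apply List.map_congr_left
  intro j _
  show φ ((x n j ^ 2) ^ (w j)) = (x n j ^ 2) ^ ((1 + 2 * v j j) * w j)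
  rw [map_zpow, map_pow, hv j, translate_sq, ← zpow_mul]

theorem translation_injective {n : ℕ} (φ : HW n →* HW n) (v : Fin n → (Fin n → ℤ))
    (hv : ∀ j, φ (x n j) = x n j * prodSq n (v j)) : Function.Injective φ := by
  have hmk : (QuotientGroup.mk' (A n)).comp φ = QuotientGroup.mk' (A n) := by
    apply PresentedGroup.ext
    intro i
    show QuotientGroup.mk (φ (x n i)) = QuotientGroup.mk (x n i)
    rw [hv i, QuotientGroup.mk_mul,
      (QuotientGroup.eq_one_iff _).mpr (prodSq_mem n (v i)), mul_one]
  rw [injective_iff_map_eq_one]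
  intro g hg1
  have hmem : g ∈ A n := by
    rw [← QuotientGroup.eq_one_iff]
    have := DFunLike.congr_fun hmk g
    simp only [MonoidHom.comp_apply, QuotientGroup.mk'_apply] at this
    rw [← this, hg1]
    rfl
  obtain ⟨w, rfl⟩ := mem_A_exists hmem
  rw [endo_prodSq φ v hv w] at hg1
  have hw0 := prodSq_eq_one hg1
  have hw : w = 0 := by
    funext j
    have := congrFun hw0 j
    simp only [Pi.zero_apply] at this ⊢
    have h1 : (1 + 2 * v j j) * w j = 0 := this
    rcases mul_eq_zero.mp h1 with h | h
    · omega
    · exact h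
  rw [hw, prodSq_zero]

theorem genP_ne_one (n : ℕ) (i : Fin n) : genP n i ≠ 1 := fun h =>
  τ_ne_one (Monoid.CoprodI.of_injective i (h.trans (map_one _).symm))

theorem mk_x_ne_one (n : ℕ) (i : Fin n) : (QuotientGroup.mk (x n i) : Wq n) ≠ 1 := by
  intro h
  rw [QuotientGroup.eq_one_iff] at h
  have h2 := (θ_eq_one_iff (x n i)).mpr h
  rw [θ_x] at h2
  exact genP_ne_one n i h2

theorem lift_exists {n : ℕ} (hn : 3 ≤ n) (β : MulAut (Wq n)) :
    ∃ γ : HW n →* HW n,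
      (QuotientGroup.mk' (A n)).comp γ = β.toMonoidHom.comp (QuotientGroup.mk' (A n)) ∧
      (∀ k : Fin n, x n k ^ 2 ∈ γ.range) := by
  have hwinv : ∀ i : Fin n, ∃ (v : Wq n) (k : Fin n),
      β (QuotientGroup.mk (x n i)) = v * QuotientGroup.mk (x n k) * v⁻¹ := by
    intro i
    have hne : β (QuotientGroup.mk (x n i)) ≠ 1 := fun h =>
      mk_x_ne_one n i (β.injective (h.trans (map_one β).symm))
    have hsq : (β (QuotientGroup.mk (x n i))) ^ 2 = 1 := by
      rw [← map_pow, mk_x_sq, map_one]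
    have hpne : θbar n (β (QuotientGroup.mk (x n i))) ≠ 1 := fun h =>
      hne (θbar_injective n (h.trans (map_one _).symm))
    have hpsq : (θbar n (β (QuotientGroup.mk (x n i)))) ^ 2 = 1 := by
      rw [← map_pow, hsq, map_one]
    obtain ⟨q, k, hqk⟩ := invol_P hpne hpsq
    refine ⟨ψ n q, k, ?_⟩
    have h3 := congrArg (ψ n) hqk
    rw [ψ_θbar] at h3
    rw [h3, map_mul, map_mul, map_inv, ψ_genP]
  choose v σ hv using hwinv
  choose g hg using fun i => QuotientGroup.mk'_surjective (A n) (v i)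
  have hg' : ∀ i, (QuotientGroup.mk (g i) : Wq n) = v i := hg
  -- σ is surjective, hence injective
  have hσ : Function.Surjective σ := by
    by_contra hcon
    rw [Function.Surjective] at hcon
    push_neg at hcon
    obtain ⟨i0, hi0⟩ := hcon
    have h1 : (ξbar n i0).comp (β.toMonoidHom.comp (QuotientGroup.mk' (A n)))
        = (1 : HW n →* C2) := by
      apply PresentedGroup.ext
      intro i
      show ξbar n i0 (β (QuotientGroup.mk (x n i))) = 1
      rw [hv i, map_mul, map_mul, map_inv, ξbar_mk, ξ_x, if_neg (fun h => hi0 i h),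
        mul_one, mul_inv_cancel]
    obtain ⟨w0, hw0⟩ := β.surjective (QuotientGroup.mk (x n i0))
    obtain ⟨g0, rfl⟩ := QuotientGroup.mk'_surjective (A n) w0
    have h2 := DFunLike.congr_fun h1 g0
    simp only [QuotientGroup.mk'_apply] at hw0
    have h3 : ξbar n i0 (β (QuotientGroup.mk g0)) = 1 := h2
    rw [hw0] at h3
    rw [ξbar_mk, ξ_x, if_pos rfl] at h3
    exact τ_ne_one h3
  have hσinj : Function.Injective σ := Finite.injective_iff_surjective.mpr hσ
  set y : Fin n → HW n := fun i => g i * x n (σ i) * (g i)⁻¹ with hy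
  have hysq : ∀ j, y j ^ 2 = (x n (σ j) ^ 2) ^ ((sHom n (σ j) (g j) : ℤˣ) : ℤ) := by
    intro j
    have e : y j ^ 2 = g j * (x n (σ j)) ^ 2 * (g j)⁻¹ := by
      rw [hy]
      beta_reduce
      rw [pow_two, pow_two]
      group
    rw [e, conj_sq]
  have hmky : ∀ i, (QuotientGroup.mk (y i) : Wq n)
      = v i * QuotientGroup.mk (x n (σ i)) * (v i)⁻¹ := by
    intro i
    rw [hy]
    beta_reduce
    rw [QuotientGroup.mk_mul, QuotientGroup.mk_mul, QuotientGroup.mk_inv, hg' i]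
  have hsign : ∀ i j : Fin n, i ≠ j → sHom n (σ j) (y i) = -1 := by
    intro i j hij
    have h1 : sHom n (σ j) (y i) = sbar n (σ j) (QuotientGroup.mk (y i)) := rfl
    rw [h1, hmky i, map_mul, map_mul, map_inv, sbar_mk, sHom_x,
      if_neg (fun h => hij (hσinj h))]
    rcases Int.units_eq_one_or (sbar n (σ j) (v i)) with h | h <;> rw [h] <;> decide
  have hrel : ∀ r ∈ HWrels n, FreeGroup.lift y r = 1 := by
    rintro r ⟨i, j, hij, rfl⟩
    simp only [map_mul, map_inv, map_pow, FreeGroup.lift_apply_of]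
    have hid : (y i)⁻¹ * (y j) ^ 2 * (y i) = ((y j) ^ 2)⁻¹ := by
      rw [hysq j, conj_zpow', conj_sq' n (σ j) (y i), hsign i j hij,
        show (((-1 : ℤˣ) : ℤ)) = -1 from rfl, ← zpow_mul, neg_one_mul, zpow_neg]
    rw [hid, inv_mul_cancel]
  refine ⟨PresentedGroup.toGroup hrel, ?_, ?_⟩
  · apply PresentedGroup.ext
    intro i
    show QuotientGroup.mk (PresentedGroup.toGroup hrel (PresentedGroup.of i))
        = β (QuotientGroup.mk (x n i))
    rw [PresentedGroup.toGroup.of, hv i, hmky i]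
  · intro k
    obtain ⟨j, rfl⟩ := hσ k
    refine ⟨(x n j ^ 2) ^ ((sHom n (σ j) (g j) : ℤˣ) : ℤ), ?_⟩
    rw [map_zpow, map_pow]
    rw [show PresentedGroup.toGroup hrel (x n j) = y j from PresentedGroup.toGroup.of hrel]
    rw [hysq j, ← zpow_mul]
    have hcc : ((sHom n (σ j) (g j) : ℤˣ) : ℤ) * ((sHom n (σ j) (g j) : ℤˣ) : ℤ) = 1 := by
      rcases Int.units_eq_one_or (sHom n (σ j) (g j)) with h | h <;> rw [h] <;> rfl
    rw [hcc, zpow_one]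

end HWaux

open HWaux in
/-- Theorem `aut-w-1`: for `n ≥ 3` there is a homomorphism
`π : Aut(G_n) → Aut(W_n)` induced by the canonical projection (it exists since `A_n`
is characteristic); it is surjective and its kernel is exactly `t(M*)`, the group of
translation automorphisms, yielding `1 → M* → Aut(G_n) → Aut(W_n) → 1`. -/
theorem stmt9 (n : ℕ) (hn : 3 ≤ n) :
    ∃ π : MulAut (HW n) →* MulAut (Wq n),
      (∀ (α : MulAut (HW n)) (g : HW n),
        π α (QuotientGroup.mk g) = QuotientGroup.mk (α g)) ∧
      Function.Surjective π ∧
      (∀ α : MulAut (HW n),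
        π α = 1 ↔ ∃ 𝔞 : MM n, IsUnit 𝔞 ∧ ∀ i, α (x n i) = x n i * aElt n 𝔞 i) := by
  classical
  refine ⟨πHom n hn, fun α g => rfl, ?_, ?_⟩
  · -- surjectivity
    intro β
    obtain ⟨γ, hγ, hγsq⟩ := lift_exists hn β
    obtain ⟨δ, hδ, hδsq⟩ := lift_exists hn β⁻¹
    have hγ' : ∀ h : HW n, (QuotientGroup.mk (γ h) : Wq n) = β (QuotientGroup.mk h) := by
      intro h
      have h1 := DFunLike.congr_fun hγ h
      simpa using h1
    have hδ' : ∀ h : HW n, (QuotientGroup.mk (δ h) : Wq n) = β⁻¹ (QuotientGroup.mk h) := by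
      intro h
      have h1 := DFunLike.congr_fun hδ h
      simpa using h1
    have hmkdg : ∀ h : HW n, (QuotientGroup.mk (δ (γ h)) : Wq n) = QuotientGroup.mk h := by
      intro h
      rw [hδ' (γ h), hγ' h, MulAut.inv_def, MulEquiv.symm_apply_apply]
    have hmem : ∀ i : Fin n, (x n i)⁻¹ * δ (γ (x n i)) ∈ A n := fun i =>
      QuotientGroup.eq.mp (hmkdg (x n i)).symm
    choose vv hvv using fun i => mem_A_exists (hmem i)
    have hφx : ∀ i, (δ.comp γ) (x n i) = x n i * prodSq n (vv i) := by
      intro i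
      rw [MonoidHom.comp_apply, ← hvv i]
      group
    have hγinj : Function.Injective γ := by
      have hφinj := translation_injective (δ.comp γ) vv hφx
      intro a b hab
      exact hφinj (show δ (γ a) = δ (γ b) from congrArg δ hab)
    have hγsurj : Function.Surjective γ := by
      have hA : A n ≤ γ.range := by
        rw [A, Subgroup.closure_le]
        rintro - ⟨k, rfl⟩
        exact hγsq k
      intro h
      obtain ⟨w1, hw1⟩ := β.surjective (QuotientGroup.mk h)
      obtain ⟨h1, rfl⟩ := QuotientGroup.mk'_surjective (A n) w1
      have h3 : (QuotientGroup.mk (γ h1) : Wq n) = QuotientGroup.mk h := by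
        rw [hγ' h1, ← hw1]
        rfl
      have h4 : (γ h1)⁻¹ * h ∈ A n := QuotientGroup.eq.mp h3
      obtain ⟨h2, hh2⟩ := hA h4
      refine ⟨h1 * h2, ?_⟩
      rw [map_mul, hh2]
      group
    refine ⟨MulEquiv.ofBijective (γ : HW n →* HW n) ⟨hγinj, hγsurj⟩, ?_⟩
    apply MulEquiv.ext
    intro w
    induction w using QuotientGroup.induction_on with
    | H h =>
      calc (πHom n hn (MulEquiv.ofBijective (γ : HW n →* HW n) ⟨hγinj, hγsurj⟩))
            (QuotientGroup.mk h)
          = QuotientGroup.mk (γ h) := rfl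
        _ = β (QuotientGroup.mk h) := hγ' h
  · -- the kernel
    intro α
    constructor
    · intro h1
      have hxi : ∀ i : Fin n,
          (QuotientGroup.mk (α (x n i)) : Wq n) = QuotientGroup.mk (x n i) := by
        intro i
        have h2 : (πHom n hn α) (QuotientGroup.mk (x n i))
            = (1 : MulAut (Wq n)) (QuotientGroup.mk (x n i)) := by rw [h1]
        exact h2
      have h1' : πHom n hn α⁻¹ = 1 := by rw [map_inv, h1, inv_one]
      have hxi' : ∀ i : Fin n,
          (QuotientGroup.mk (α⁻¹ (x n i)) : Wq n) = QuotientGroup.mk (x n i) := by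
        intro i
        have h2 : (πHom n hn α⁻¹) (QuotientGroup.mk (x n i))
            = (1 : MulAut (Wq n)) (QuotientGroup.mk (x n i)) := by rw [h1']
        exact h2
      choose vv hvv using fun i => mem_A_exists (QuotientGroup.eq.mp (hxi i).symm)
      choose ww hww using fun i => mem_A_exists (QuotientGroup.eq.mp (hxi' i).symm)
      have hαx : ∀ i, α (x n i) = x n i * prodSq n (vv i) := by
        intro i
        rw [← hvv i]
        group
      have hβx : ∀ i, α⁻¹ (x n i) = x n i * prodSq n (ww i) := by
        intro i
        rw [← hww i]
        group
      -- β ∘ α = id gives 𝔟 * 𝔞 = 1 (entries: ww i j + (1+2 ww j j) vv i j = 0)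
      have hz1 : ∀ i, ww i + (fun j => (1 + 2 * ww j j) * vv i j) = 0 := by
        intro i
        apply prodSq_eq_one
        have h5 : α⁻¹ (α (x n i)) = x n i := by
          rw [MulAut.inv_def, MulEquiv.symm_apply_apply]
        rw [hαx i] at h5
        have h6 : (α⁻¹ : MulAut (HW n)).toMonoidHom (prodSq n (vv i))
            = prodSq n (fun j => (1 + 2 * ww j j) * vv i j) :=
          endo_prodSq (α⁻¹ : MulAut (HW n)).toMonoidHom ww (fun j => hβx j) (vv i)
        rw [map_mul] at h5
        rw [show ((α⁻¹ : MulAut (HW n)) (x n i) : HW n) = x n i * prodSq n (ww i) from hβx i,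
          show ((α⁻¹ : MulAut (HW n)) (prodSq n (vv i)) : HW n)
            = prodSq n (fun j => (1 + 2 * ww j j) * vv i j) from h6] at h5
        rw [prodSq_add]
        have h7 : x n i * (prodSq n (ww i) * prodSq n (fun j => (1 + 2 * ww j j) * vv i j))
            = x n i * 1 := by
          rw [mul_one, ← mul_assoc]
          exact h5
        exact mul_left_cancel h7
      have hz2 : ∀ i, vv i + (fun j => (1 + 2 * vv j j) * ww i j) = 0 := by
        intro i
        apply prodSq_eq_one
        have h5 : α (α⁻¹ (x n i)) = x n i := by
          rw [MulAut.inv_def, MulEquiv.apply_symm_apply]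
        rw [hβx i] at h5
        have h6 : (α : MulAut (HW n)).toMonoidHom (prodSq n (ww i))
            = prodSq n (fun j => (1 + 2 * vv j j) * ww i j) :=
          endo_prodSq (α : MulAut (HW n)).toMonoidHom vv (fun j => hαx j) (ww i)
        rw [map_mul] at h5
        rw [show (α (x n i) : HW n) = x n i * prodSq n (vv i) from hαx i,
          show (α (prodSq n (ww i)) : HW n)
            = prodSq n (fun j => (1 + 2 * vv j j) * ww i j) from h6] at h5
        rw [prodSq_add]
        have h7 : x n i * (prodSq n (vv i) * prodSq n (fun j => (1 + 2 * vv j j) * ww i j))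
            = x n i * 1 := by
          rw [mul_one, ← mul_assoc]
          exact h5
        exact mul_left_cancel h7
      -- assemble the matrix
      refine ⟨Matrix.of vv, ?_, ?_⟩
      · refine ⟨⟨Matrix.of vv, Matrix.of ww, ?_, ?_⟩, rfl⟩
        · apply MM.ext
          intro i j
          show vv i j + (1 + 2 * vv j j) * ww i j = 0
          have := congrFun (hz2 i) j
          simpa using this
        · apply MM.ext
          intro i j
          show ww i j + (1 + 2 * ww j j) * vv i j = 0
          have := congrFun (hz1 i) j
          simpa using this
      · intro i
        rw [hαx i]
        rfl
    · rintro ⟨𝔞, -, hx⟩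
      apply MulEquiv.ext
      intro w
      induction w using QuotientGroup.induction_on with
      | H h =>
        show (QuotientGroup.mk (α h) : Wq n) = QuotientGroup.mk h
        have hh : (QuotientGroup.mk' (A n)).comp (α : MulAut (HW n)).toMonoidHom
            = QuotientGroup.mk' (A n) := by
          apply PresentedGroup.ext
          intro i
          show (QuotientGroup.mk ((α : MulAut (HW n)) (x n i)) : Wq n) = QuotientGroup.mk (x n i)
          rw [hx i, aElt_eq, QuotientGroup.mk_mul,
            (QuotientGroup.eq_one_iff _).mpr (prodSq_mem n _), mul_one]
        have h2 := DFunLike.congr_fun hh h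
        simpa using h2
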